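/- For every real x with 0 < x < 1.371, one has (tan x)/x < (π² − (4 − π²/3)x² − (4/3 − 2π²/15)x⁴)/(π² − 4x²). -/

import Mathlib

open Real

private theorem aux_nonneg {f f' : ℝ → ℝ} (hder : ∀ y, HasDerivAt f (f' y) y)
    (h0 : f 0 = 0) (hd : ∀ y, 0 ≤ y → 0 ≤ f' y) {x : ℝ} (hx : 0 ≤ x) : 0 ≤ f x := by
  have hmono : MonotoneOn f (Set.Ici (0:ℝ)) := by
    refine monotoneOn_of_deriv_nonneg (convex_Ici 0) ?_ ?_ ?_
    · exact fun y _ => (hder y).continuousAt.continuousWithinAt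
    · exact fun y _ => (hder y).differentiableAt.differentiableWithinAt
    · intro y hy
      rw [(hder y).deriv]
      refine hd y (le_of_lt ?_)
      simpa [interior_Ici] using hy
  have h2 := hmono Set.self_mem_Ici (Set.mem_Ici.2 hx) hx
  rw [h0] at h2
  exact h2

private theorem sin_lb2 {y : ℝ} (hy : 0 ≤ y) : y - y^3/6 ≤ Real.sin y := by
  have h := aux_nonneg (f := fun t : ℝ => Real.sin t - (t - t^3/6))
      (f' := fun t : ℝ => Real.cos t - (1 - t^2/2)) ?_ (by norm_num) ?_ hy
  · linarith
  · intro y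
    have hp : HasDerivAt (fun t : ℝ => t - t^3/6) (1 - y^2/2) y := by
      have := (hasDerivAt_id y).sub ((hasDerivAt_pow 3 y).div_const 6)
      refine this.congr_deriv ?_
      push_cast
      ring
    exact (Real.hasDerivAt_sin y).sub hp
  · intro y hy
    have := Real.one_sub_sq_div_two_le_cos (x := y)
    linarith

private theorem cos_ub2 {y : ℝ} (hy : 0 ≤ y) : Real.cos y ≤ 1 - y^2/2 + y^4/24 := by
  have h := aux_nonneg (f := fun t : ℝ => (1 - t^2/2 + t^4/24) - Real.cos t)
      (f' := fun t : ℝ => Real.sin t - (t - t^3/6)) ?_ (by norm_num) ?_ hy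
  · linarith
  · intro y
    have hp : HasDerivAt (fun t : ℝ => 1 - t^2/2 + t^4/24) (-y + y^3/6) y := by
      have := (((hasDerivAt_const y (1:ℝ)).sub ((hasDerivAt_pow 2 y).div_const 2)).add
        ((hasDerivAt_pow 4 y).div_const 24))
      refine this.congr_deriv ?_
      push_cast
      ring
    have := hp.sub (Real.hasDerivAt_cos y)
    refine this.congr_deriv ?_
    ring
  · intro y hy
    linarith [sin_lb2 hy]

private theorem sin_ub3 {y : ℝ} (hy : 0 ≤ y) : Real.sin y ≤ y - y^3/6 + y^5/120 := by
  have h := aux_nonneg (f := fun t : ℝ => (t - t^3/6 + t^5/120) - Real.sin t)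
      (f' := fun t : ℝ => (1 - t^2/2 + t^4/24) - Real.cos t) ?_ (by norm_num) ?_ hy
  · linarith
  · intro y
    have hp : HasDerivAt (fun t : ℝ => t - t^3/6 + t^5/120) (1 - y^2/2 + y^4/24) y := by
      have := ((hasDerivAt_id y).sub ((hasDerivAt_pow 3 y).div_const 6)).add
        ((hasDerivAt_pow 5 y).div_const 120)
      refine this.congr_deriv ?_
      push_cast
      ring
    exact hp.sub (Real.hasDerivAt_sin y)
  · intro y hy
    linarith [cos_ub2 hy]

private theorem cos_lb3 {y : ℝ} (hy : 0 ≤ y) : 1 - y^2/2 + y^4/24 - y^6/720 ≤ Real.cos y := by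
  have h := aux_nonneg (f := fun t : ℝ => Real.cos t - (1 - t^2/2 + t^4/24 - t^6/720))
      (f' := fun t : ℝ => (t - t^3/6 + t^5/120) - Real.sin t) ?_ (by norm_num) ?_ hy
  · linarith
  · intro y
    have hp : HasDerivAt (fun t : ℝ => 1 - t^2/2 + t^4/24 - t^6/720) (-y + y^3/6 - y^5/120) y := by
      have := (((hasDerivAt_const y (1:ℝ)).sub ((hasDerivAt_pow 2 y).div_const 2)).add
        ((hasDerivAt_pow 4 y).div_const 24)).sub ((hasDerivAt_pow 6 y).div_const 720)
      refine this.congr_deriv ?_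
      push_cast
      ring
    have := (Real.hasDerivAt_cos y).sub hp
    refine this.congr_deriv ?_
    ring
  · intro y hy
    linarith [sin_ub3 hy]

private theorem sin_lb4 {y : ℝ} (hy : 0 ≤ y) :
    y - y^3/6 + y^5/120 - y^7/5040 ≤ Real.sin y := by
  have h := aux_nonneg (f := fun t : ℝ => Real.sin t - (t - t^3/6 + t^5/120 - t^7/5040))
      (f' := fun t : ℝ => Real.cos t - (1 - t^2/2 + t^4/24 - t^6/720)) ?_ (by norm_num) ?_ hy
  · linarith
  · intro y
    have hp : HasDerivAt (fun t : ℝ => t - t^3/6 + t^5/120 - t^7/5040)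
        (1 - y^2/2 + y^4/24 - y^6/720) y := by
      have := (((hasDerivAt_id y).sub ((hasDerivAt_pow 3 y).div_const 6)).add
        ((hasDerivAt_pow 5 y).div_const 120)).sub ((hasDerivAt_pow 7 y).div_const 5040)
      refine this.congr_deriv ?_
      push_cast
      ring
    exact (Real.hasDerivAt_sin y).sub hp
  · intro y hy
    linarith [cos_lb3 hy]

private theorem cos_ub4 {y : ℝ} (hy : 0 ≤ y) :
    Real.cos y ≤ 1 - y^2/2 + y^4/24 - y^6/720 + y^8/40320 := by
  have h := aux_nonneg
      (f := fun t : ℝ => (1 - t^2/2 + t^4/24 - t^6/720 + t^8/40320) - Real.cos t)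
      (f' := fun t : ℝ => Real.sin t - (t - t^3/6 + t^5/120 - t^7/5040)) ?_ (by norm_num) ?_ hy
  · linarith
  · intro y
    have hp : HasDerivAt (fun t : ℝ => 1 - t^2/2 + t^4/24 - t^6/720 + t^8/40320)
        (-y + y^3/6 - y^5/120 + y^7/5040) y := by
      have := ((((hasDerivAt_const y (1:ℝ)).sub ((hasDerivAt_pow 2 y).div_const 2)).add
        ((hasDerivAt_pow 4 y).div_const 24)).sub ((hasDerivAt_pow 6 y).div_const 720)).add
        ((hasDerivAt_pow 8 y).div_const 40320)
      refine this.congr_deriv ?_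
      push_cast
      ring
    have := hp.sub (Real.hasDerivAt_cos y)
    refine this.congr_deriv ?_
    ring
  · intro y hy
    linarith [sin_lb4 hy]

private theorem sin_ub5 {y : ℝ} (hy : 0 ≤ y) :
    Real.sin y ≤ y - y^3/6 + y^5/120 - y^7/5040 + y^9/362880 := by
  have h := aux_nonneg
      (f := fun t : ℝ => (t - t^3/6 + t^5/120 - t^7/5040 + t^9/362880) - Real.sin t)
      (f' := fun t : ℝ => (1 - t^2/2 + t^4/24 - t^6/720 + t^8/40320) - Real.cos t)
      ?_ (by norm_num) ?_ hy
  · linarith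
  · intro y
    have hp : HasDerivAt (fun t : ℝ => t - t^3/6 + t^5/120 - t^7/5040 + t^9/362880)
        (1 - y^2/2 + y^4/24 - y^6/720 + y^8/40320) y := by
      have := ((((hasDerivAt_id y).sub ((hasDerivAt_pow 3 y).div_const 6)).add
        ((hasDerivAt_pow 5 y).div_const 120)).sub ((hasDerivAt_pow 7 y).div_const 5040)).add
        ((hasDerivAt_pow 9 y).div_const 362880)
      refine this.congr_deriv ?_
      push_cast
      ring
    exact hp.sub (Real.hasDerivAt_sin y)
  · intro y hy
    linarith [cos_ub4 hy]

private theorem cos_lb5 {y : ℝ} (hy : 0 ≤ y) :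
    1 - y^2/2 + y^4/24 - y^6/720 + y^8/40320 - y^10/3628800 ≤ Real.cos y := by
  have h := aux_nonneg
      (f := fun t : ℝ => Real.cos t - (1 - t^2/2 + t^4/24 - t^6/720 + t^8/40320 - t^10/3628800))
      (f' := fun t : ℝ => (t - t^3/6 + t^5/120 - t^7/5040 + t^9/362880) - Real.sin t)
      ?_ (by norm_num) ?_ hy
  · linarith
  · intro y
    have hp : HasDerivAt
        (fun t : ℝ => 1 - t^2/2 + t^4/24 - t^6/720 + t^8/40320 - t^10/3628800)
        (-y + y^3/6 - y^5/120 + y^7/5040 - y^9/362880) y := by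
      have := (((((hasDerivAt_const y (1:ℝ)).sub ((hasDerivAt_pow 2 y).div_const 2)).add
        ((hasDerivAt_pow 4 y).div_const 24)).sub ((hasDerivAt_pow 6 y).div_const 720)).add
        ((hasDerivAt_pow 8 y).div_const 40320)).sub ((hasDerivAt_pow 10 y).div_const 3628800)
      refine this.congr_deriv ?_
      push_cast
      ring
    have := (Real.hasDerivAt_cos y).sub hp
    refine this.congr_deriv ?_
    ring
  · intro y hy
    linarith [sin_ub5 hy]

private theorem sin_lb6 {y : ℝ} (hy : 0 ≤ y) :
    y - y^3/6 + y^5/120 - y^7/5040 + y^9/362880 - y^11/39916800 ≤ Real.sin y := by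
  have h := aux_nonneg
      (f := fun t : ℝ =>
        Real.sin t - (t - t^3/6 + t^5/120 - t^7/5040 + t^9/362880 - t^11/39916800))
      (f' := fun t : ℝ =>
        Real.cos t - (1 - t^2/2 + t^4/24 - t^6/720 + t^8/40320 - t^10/3628800))
      ?_ (by norm_num) ?_ hy
  · linarith
  · intro y
    have hp : HasDerivAt
        (fun t : ℝ => t - t^3/6 + t^5/120 - t^7/5040 + t^9/362880 - t^11/39916800)
        (1 - y^2/2 + y^4/24 - y^6/720 + y^8/40320 - y^10/3628800) y := by
      have := (((((hasDerivAt_id y).sub ((hasDerivAt_pow 3 y).div_const 6)).add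
        ((hasDerivAt_pow 5 y).div_const 120)).sub ((hasDerivAt_pow 7 y).div_const 5040)).add
        ((hasDerivAt_pow 9 y).div_const 362880)).sub ((hasDerivAt_pow 11 y).div_const 39916800)
      refine this.congr_deriv ?_
      push_cast
      ring
    exact (Real.hasDerivAt_sin y).sub hp
  · intro y hy
    linarith [cos_lb5 hy]

set_option maxHeartbeats 1000000 in
theorem stmt5 (x : ℝ) (h0 : 0 < x) (h1 : x < 1.371) :
    Real.tan x / x <
      (π ^ 2 - (4 - π ^ 2 / 3) * x ^ 2 - (4 / 3 - 2 * π ^ 2 / 15) * x ^ 4) /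
        (π ^ 2 - 4 * x ^ 2) := by
  have hx0 : (0:ℝ) ≤ x := h0.le
  have hx2 : x ^ 2 < 1879641 / 1000000 := by nlinarith
  have hpi3 : (3:ℝ) < π := Real.pi_gt_three
  have hpiU : π < 3.141593 := Real.pi_lt_d6
  have hxpi : x < π / 2 := by nlinarith
  have hD : 0 < π ^ 2 - 4 * x ^ 2 := by nlinarith
  have hcos : 0 < Real.cos x := Real.cos_pos_of_mem_Ioo ⟨by linarith, hxpi⟩
  have hsin : 0 < Real.sin x := Real.sin_pos_of_pos_of_lt_pi h0 (by nlinarith)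
  -- Taylor bounds at x
  have hClo := cos_lb5 hx0
  have hChi := cos_ub4 hx0
  have hShi := sin_ub5 hx0
  have hSlo := sin_lb6 hx0
  -- Reduce goal to polynomial-trig inequality
  rw [div_lt_div_iff₀ h0 hD, Real.tan_eq_sin_div_cos, div_mul_eq_mul_div, div_lt_iff₀ hcos]
  -- Target: sin x * (π^2 - 4x^2) < (N) * x * cos x
  -- A := x * cos x * (1 + x^2/3 + 2x^4/15) - sin x
  -- B := 4x^2 * sin x - (4x^3 + 4x^5/3) * cos x
  have hmA : (0:ℝ) ≤ x * (1 + x^2/3 + 2*x^4/15) := by positivity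
  have hA : x * (1 - x^2/2 + x^4/24 - x^6/720 + x^8/40320 - x^10/3628800) * (1 + x^2/3 + 2*x^4/15)
      - (x - x^3/6 + x^5/120 - x^7/5040 + x^9/362880)
      ≤ x * Real.cos x * (1 + x^2/3 + 2*x^4/15) - Real.sin x := by
    nlinarith [mul_le_mul_of_nonneg_left hClo hmA]
  have hmB1 : (0:ℝ) ≤ 4*x^2 := by positivity
  have hmB2 : (0:ℝ) ≤ 4*x^3 + 4*x^5/3 := by positivity
  have hB : 4*x^2 * (x - x^3/6 + x^5/120 - x^7/5040 + x^9/362880 - x^11/39916800)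
      - (4*x^3 + 4*x^5/3) * (1 - x^2/2 + x^4/24 - x^6/720 + x^8/40320)
      ≤ 4*x^2 * Real.sin x - (4*x^3 + 4*x^5/3) * Real.cos x := by
    nlinarith [mul_le_mul_of_nonneg_left hSlo hmB1, mul_le_mul_of_nonneg_left hChi hmB2]
  -- Alb polynomial and its nonpositivity
  have hAlbval : x * (1 - x^2/2 + x^4/24 - x^6/720 + x^8/40320 - x^10/3628800) * (1 + x^2/3 + 2*x^4/15)
      - (x - x^3/6 + x^5/120 - x^7/5040 + x^9/362880)
      = x^7 * (-(17/315) + (29/5670)*x^2 - (643/3628800)*x^4 + (1/311040)*x^6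
          - (1/27216000)*x^8) := by ring
  have hx4 : x^4 ≤ (1879641/1000000:ℝ)^2 := by nlinarith
  have hx6 : x^6 ≤ (1879641/1000000:ℝ)^3 := by nlinarith [hx4, hx2, pow_nonneg hx0 4, sq_nonneg x]
  have hx8 : x^8 ≤ (1879641/1000000:ℝ)^4 := by nlinarith [hx4, sq_nonneg (x^2), pow_nonneg hx0 4]
  have hSneg : -(17/315) + (29/5670)*x^2 - (643/3628800)*x^4 + (1/311040)*x^6
      - (1/27216000)*x^8 ≤ 0 := by
    linarith [hx2, hx4, hx6, hx8, pow_nonneg hx0 4, pow_nonneg hx0 8]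
  have hAlbnonpos : x * (1 - x^2/2 + x^4/24 - x^6/720 + x^8/40320 - x^10/3628800) * (1 + x^2/3 + 2*x^4/15)
      - (x - x^3/6 + x^5/120 - x^7/5040 + x^9/362880) ≤ 0 := by
    rw [hAlbval]
    have : (0:ℝ) ≤ x^7 := by positivity
    exact mul_nonpos_of_nonneg_of_nonpos this hSneg
  -- pi squared bound
  have hpisq : π ^ 2 ≤ (3.141593:ℝ)^2 := by nlinarith
  have hpisq0 : (0:ℝ) ≤ π ^ 2 := by positivity
  -- combine: π^2 * Alb ≥ (3.141593)^2 * Alb  (since Alb ≤ 0)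
  set Alb : ℝ := x * (1 - x^2/2 + x^4/24 - x^6/720 + x^8/40320 - x^10/3628800) * (1 + x^2/3 + 2*x^4/15)
      - (x - x^3/6 + x^5/120 - x^7/5040 + x^9/362880) with hAlbdef
  have h3 : (3.141593:ℝ)^2 * Alb ≤ π ^ 2 * Alb :=
    mul_le_mul_of_nonpos_right hpisq hAlbnonpos
  have h2 : π ^ 2 * Alb ≤ π ^ 2 * (x * Real.cos x * (1 + x^2/3 + 2*x^4/15) - Real.sin x) :=
    mul_le_mul_of_nonneg_left hA hpisq0
  -- final polynomial positivity
  have hR : 0 < (30955454281/45000000000000 : ℝ)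
      - (1781409248179/5670000000000000)*x^2
      + (17947656857231/1209600000000000000)*x^4
      - (34440293521027/23950080000000000000)*x^6
      - (1409943796807/3888000000000000000)*x^8 := by
    linarith [hx2, hx6, hx8, pow_nonneg hx0 4]
  have hQ : 0 < (3.141593:ℝ)^2 * Alb
      + (4*x^2 * (x - x^3/6 + x^5/120 - x^7/5040 + x^9/362880 - x^11/39916800)
        - (4*x^3 + 4*x^5/3) * (1 - x^2/2 + x^4/24 - x^6/720 + x^8/40320)) := by
    have hx7 : (0:ℝ) < x^7 := by positivity
    have hmul := mul_pos hx7 hR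
    have heq : (3.141593:ℝ)^2 * Alb
      + (4*x^2 * (x - x^3/6 + x^5/120 - x^7/5040 + x^9/362880 - x^11/39916800)
        - (4*x^3 + 4*x^5/3) * (1 - x^2/2 + x^4/24 - x^6/720 + x^8/40320))
      = x^7 * ((30955454281/45000000000000 : ℝ)
      - (1781409248179/5670000000000000)*x^2
      + (17947656857231/1209600000000000000)*x^4
      - (34440293521027/23950080000000000000)*x^6
      - (1409943796807/3888000000000000000)*x^8) := by
      rw [hAlbdef]; ring
    linarith [hmul, heq]
  have hkey : (π ^ 2 - (4 - π ^ 2 / 3) * x ^ 2 - (4 / 3 - 2 * π ^ 2 / 15) * x ^ 4) * x * Real.cos x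
      - Real.sin x * (π ^ 2 - 4 * x ^ 2)
      = π ^ 2 * (x * Real.cos x * (1 + x^2/3 + 2*x^4/15) - Real.sin x)
        + (4*x^2 * Real.sin x - (4*x^3 + 4*x^5/3) * Real.cos x) := by ring
  linarith [h2, h3, hB, hQ, hkey]
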